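/- Let q, q' > 0 with q ≠ 1, E_1 ≤ … ≤ E_W real numbers (with E_1 ≤ 0 ≤ E_W), and suppose p̃ ∈ ℝ^W_{++} is a maximizer of S_q over the set {p ∈ ℝ^W_{++} : ∑ p_i = 1, ∑ p_i^{q'} E_i = 0}. Then there exists β ∈ ℝ such that, setting x̃_i = p̃_i^{q−1} / ∑_j p̃_j^q, one has x̃_i = 1 + (1−q) β E_i x̃_i^{(q'−1)/(q−1)} for all i, and ∑_{i=1}^W x̃_i^{1/(q−1)} (x̃_i − 1) = 0. -/

import Mathlib

open Finset

/-- Tsallis entropy `S_q(p) = k (∑ i, p_i^q − 1)/(1−q)` (real power). -/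
noncomputable def tsallisEntropy (k q : ℝ) {ι : Type*} [Fintype ι] (p : ι → ℝ) : ℝ :=
  k * ((∑ i, p i ^ q) - 1) / (1 - q)

private lemma eval_sum_smul_proj {W : ℕ} (a : Fin W → ℝ) (j : Fin W) :
    (∑ i, a i • ContinuousLinearMap.proj (R := ℝ) (φ := fun _ : Fin W => ℝ) i)
      (Pi.single j 1) = a j := by
  simp [ContinuousLinearMap.sum_apply, Pi.single_apply, mul_ite]

private lemma hasDeriv_sum_rpow {W : ℕ} (c : ℝ) (w p : Fin W → ℝ) (hp : ∀ i, p i ≠ 0) :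
    HasStrictFDerivAt (fun x : Fin W → ℝ => ∑ i, x i ^ c * w i)
      (∑ i, (c * p i ^ (c - 1) * w i) •
        ContinuousLinearMap.proj (R := ℝ) (φ := fun _ : Fin W => ℝ) i) p := by
  apply HasStrictFDerivAt.fun_sum
  intro i _
  have h1 : HasStrictFDerivAt (fun x : Fin W → ℝ => x i)
      (ContinuousLinearMap.proj (R := ℝ) (φ := fun _ : Fin W => ℝ) i) p :=
    (ContinuousLinearMap.proj (R := ℝ) (φ := fun _ : Fin W => ℝ) i).hasStrictFDerivAt
  have h2 : HasStrictDerivAt (fun y : ℝ => y ^ c) (c * p i ^ (c - 1)) (p i) :=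
    Real.hasStrictDerivAt_rpow_const (Or.inl (hp i))
  have h3 := (h2.comp_hasStrictFDerivAt p h1).mul_const (w i)
  rw [smul_smul, mul_comm (w i)] at h3
  exact h3

set_option maxHeartbeats 1600000 in
theorem first_order_conditions (W : ℕ) (hW : 2 ≤ W) (k q q' : ℝ)
    (hk : 0 < k) (hq : 0 < q) (hq1 : q ≠ 1) (hq' : 0 < q')
    (E : Fin W → ℝ) (hE : Monotone E)
    (hE1 : E ⟨0, by omega⟩ ≤ 0) (hEW : 0 ≤ E ⟨W - 1, by omega⟩)
    (p : Fin W → ℝ) (hp : ∀ i, 0 < p i)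
    (hsum : ∑ i, p i = 1) (hcon : ∑ i, p i ^ q' * E i = 0)
    (hmax : ∀ p' : Fin W → ℝ, (∀ i, 0 < p' i) → ∑ i, p' i = 1 →
      ∑ i, p' i ^ q' * E i = 0 → tsallisEntropy k q p' ≤ tsallisEntropy k q p) :
    ∃ β : ℝ,
      (∀ i, (p i ^ (q - 1) / ∑ j, p j ^ q) =
        1 + (1 - q) * β * E i * (p i ^ (q - 1) / ∑ j, p j ^ q) ^ ((q' - 1) / (q - 1))) ∧
      ∑ i, (p i ^ (q - 1) / ∑ j, p j ^ q) ^ ((1 : ℝ) / (q - 1)) *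
          ((p i ^ (q - 1) / ∑ j, p j ^ q) - 1) = 0 := by
  classical
  have hq1' : q - 1 ≠ 0 := sub_ne_zero.mpr hq1
  have h1q : (1 : ℝ) - q ≠ 0 := sub_ne_zero.mpr (Ne.symm hq1)
  set S : ℝ := ∑ j, p j ^ q with hSdef
  have hS : 0 < S :=
    Finset.sum_pos (fun j _ => Real.rpow_pos_of_pos (hp j) q) ⟨⟨0, by omega⟩, Finset.mem_univ _⟩
  have hmul : ∀ (j : Fin W) (r : ℝ), p j * p j ^ (r - 1) = p j ^ r := by
    intro j r
    calc p j * p j ^ (r - 1) = p j ^ (1 : ℝ) * p j ^ (r - 1) := by rw [Real.rpow_one]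
      _ = p j ^ (1 + (r - 1)) := (Real.rpow_add (hp j) _ _).symm
      _ = p j ^ r := by norm_num
  -- second conjunct (pure algebra)
  have hsecond : ∑ i, (p i ^ (q - 1) / S) ^ ((1 : ℝ) / (q - 1)) *
      ((p i ^ (q - 1) / S) - 1) = 0 := by
    have h1 : ∀ i : Fin W, (p i ^ (q - 1) / S) ^ ((1 : ℝ) / (q - 1)) =
        p i / S ^ ((1 : ℝ) / (q - 1)) := by
      intro i
      rw [Real.div_rpow (Real.rpow_nonneg (hp i).le _) hS.le, ← Real.rpow_mul (hp i).le]
      congr 2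
      field_simp
      simp
    have hc : S ^ ((1 : ℝ) / (q - 1)) ≠ 0 := (Real.rpow_pos_of_pos hS _).ne'
    calc ∑ i, (p i ^ (q - 1) / S) ^ ((1 : ℝ) / (q - 1)) * ((p i ^ (q - 1) / S) - 1)
        = ∑ i, ((S ^ ((1 : ℝ) / (q - 1)) * S)⁻¹ * p i ^ q
            - (S ^ ((1 : ℝ) / (q - 1)))⁻¹ * p i) := by
          refine Finset.sum_congr rfl fun i _ => ?_
          rw [h1 i, ← hmul i q]
          field_simp
      _ = (S ^ ((1 : ℝ) / (q - 1)) * S)⁻¹ * S - (S ^ ((1 : ℝ) / (q - 1)))⁻¹ * 1 := by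
          rw [Finset.sum_sub_distrib, ← Finset.mul_sum, ← Finset.mul_sum, hsum, ← hSdef]
      _ = 0 := by field_simp; ring
  -- main algebraic reduction for the first conjunct
  have main : ∀ B : ℝ, (∀ j, p j ^ (q - 1) = S + B * (p j ^ (q' - 1) * E j)) →
      ∃ β : ℝ, ∀ i, p i ^ (q - 1) / S =
        1 + (1 - q) * β * E i * (p i ^ (q - 1) / S) ^ ((q' - 1) / (q - 1)) := by
    intro B hB
    refine ⟨B * S ^ ((q' - 1) / (q - 1)) / (S * (1 - q)), fun i => ?_⟩
    have hx : (p i ^ (q - 1) / S) ^ ((q' - 1) / (q - 1)) =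
        p i ^ (q' - 1) / S ^ ((q' - 1) / (q - 1)) := by
      rw [Real.div_rpow (Real.rpow_nonneg (hp i).le _) hS.le, ← Real.rpow_mul (hp i).le]
      congr 2
      field_simp
    have hSr : S ^ ((q' - 1) / (q - 1)) ≠ 0 := (Real.rpow_pos_of_pos hS _).ne'
    rw [hx, hB i]
    field_simp
  -- from coefficients to `A = S`
  have sumAB : ∀ A B : ℝ, (∀ j, p j ^ (q - 1) = A + B * (p j ^ (q' - 1) * E j)) → A = S := by
    intro A B hAB
    have : S = ∑ j, (A * p j + B * (p j ^ q' * E j)) := by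
      refine Finset.sum_congr rfl fun j _ => ?_
      rw [← hmul j q, hAB j]
      rw [← hmul j q']
      ring
    rw [Finset.sum_add_distrib, ← Finset.mul_sum, ← Finset.mul_sum, hsum, hcon] at this
    linarith
  -- analytic part: Lagrange multipliers
  have hpne : ∀ i, p i ≠ 0 := fun i => (hp i).ne'
  have hopen : ∀ᶠ x in nhds p, ∀ i, 0 < x i := by
    have hO : IsOpen {x : Fin W → ℝ | ∀ i, 0 < x i} := by
      have he : {x : Fin W → ℝ | ∀ i, 0 < x i} =
          ⋂ i, (fun x : Fin W → ℝ => x i) ⁻¹' Set.Ioi 0 := by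
        ext x; simp
      rw [he]
      exact isOpen_iInter_of_finite fun i => isOpen_Ioi.preimage (continuous_apply i)
    exact hO.eventually_mem hp
  -- derivative of the objective
  have hDsum : HasStrictFDerivAt (fun x : Fin W → ℝ => ∑ i, x i ^ q)
      (∑ i, (q * p i ^ (q - 1)) •
        ContinuousLinearMap.proj (R := ℝ) (φ := fun _ : Fin W => ℝ) i) p := by
    have := hasDeriv_sum_rpow q (fun _ => 1) p hpne
    simpa using this
  have hφ' : HasStrictFDerivAt (tsallisEntropy k q)
      ((k / (1 - q)) • ∑ i, (q * p i ^ (q - 1)) •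
        ContinuousLinearMap.proj (R := ℝ) (φ := fun _ : Fin W => ℝ) i) p := by
    have h2 := (hDsum.sub_const 1).const_mul (k / (1 - q))
    have he : tsallisEntropy k q = fun x : Fin W → ℝ =>
        k / (1 - q) * ((∑ i, x i ^ q) - 1) := by
      funext x; unfold tsallisEntropy; field_simp
    rw [he]
    exact h2
  -- derivative of the sum constraint
  have hg' : HasStrictFDerivAt (fun x : Fin W → ℝ => ∑ i, x i)
      (∑ i, (1 : ℝ) • ContinuousLinearMap.proj (R := ℝ) (φ := fun _ : Fin W => ℝ) i) p := by
    apply HasStrictFDerivAt.fun_sum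
    intro i _
    simpa using hasStrictFDerivAt_apply (𝕜 := ℝ) (F' := fun _ : Fin W => ℝ) i p
  -- derivative of the energy constraint
  have hh' : HasStrictFDerivAt (fun x : Fin W → ℝ => ∑ i, x i ^ q' * E i)
      (∑ i, (q' * p i ^ (q' - 1) * E i) •
        ContinuousLinearMap.proj (R := ℝ) (φ := fun _ : Fin W => ℝ) i) p :=
    hasDeriv_sum_rpow q' E p hpne
  -- case split on whether all energies vanish
  by_cases hE0 : ∀ i, E i = 0
  · -- single constraint version
    have hextr : IsLocalExtrOn (tsallisEntropy k q)
        {x : Fin W → ℝ | (∑ i, x i) = ∑ i, p i} p := by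
      refine Or.inr ?_
      filter_upwards [nhdsWithin_le_nhds hopen, self_mem_nhdsWithin] with x hx hxs
      have hxs' : (∑ i, x i) = ∑ i, p i := hxs
      refine hmax x hx (by rw [hxs', hsum]) ?_
      simp [hE0]
    obtain ⟨a, b, hab, heq⟩ := hextr.exists_multipliers_of_hasStrictFDerivAt_1d hg' hφ'
    have heval : ∀ j : Fin W, a + b * (k / (1 - q) * (q * p j ^ (q - 1))) = 0 := by
      intro j
      have := DFunLike.congr_fun heq (Pi.single j 1)
      simpa [ContinuousLinearMap.smul_apply, eval_sum_smul_proj, smul_eq_mul, mul_one, Pi.single_apply, mul_ite, mul_zero]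
        using this
    have hb : b ≠ 0 := by
      intro hb0
      apply hab
      have := heval ⟨0, by omega⟩
      rw [hb0, zero_mul, add_zero] at this
      simp [this, hb0]
    have hconst : ∀ j : Fin W, p j ^ (q - 1) = -a * (1 - q) / (b * k * q) := by
      intro j
      have h := heval j
      have hkq : b * (k / (1 - q)) * q ≠ 0 := by
        apply mul_ne_zero (mul_ne_zero hb (div_ne_zero hk.ne' h1q)) hq.ne'
      field_simp at h ⊢
      nlinarith [h]
    set t : ℝ := -a * (1 - q) / (b * k * q) with ht
    have htS : S = t := by
      have : S = ∑ j, p j * t := by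
        refine Finset.sum_congr rfl fun j _ => ?_
        rw [← hmul j q, hconst j]
      rw [← Finset.sum_mul, hsum, one_mul] at this
      exact this
    obtain ⟨β, hβ⟩ := main 0 (by
      intro j
      rw [hconst j, ← htS]
      ring)
    exact ⟨β, hβ, hsecond⟩
  · -- two constraints
    set f : Fin 2 → (Fin W → ℝ) → ℝ :=
      ![fun x => ∑ i, x i, fun x => ∑ i, x i ^ q' * E i] with hf
    set f' : Fin 2 → (Fin W → ℝ) →L[ℝ] ℝ :=
      ![∑ i, (1 : ℝ) • ContinuousLinearMap.proj (R := ℝ) (φ := fun _ : Fin W => ℝ) i,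
        ∑ i, (q' * p i ^ (q' - 1) * E i) •
          ContinuousLinearMap.proj (R := ℝ) (φ := fun _ : Fin W => ℝ) i] with hf'
    have hextr : IsLocalExtrOn (tsallisEntropy k q)
        {x : Fin W → ℝ | ∀ i, f i x = f i p} p := by
      refine Or.inr ?_
      filter_upwards [nhdsWithin_le_nhds hopen, self_mem_nhdsWithin] with x hx hxs
      have h0 := hxs 0
      have h1 := hxs 1
      simp only [hf, Matrix.cons_val_zero, Matrix.cons_val_one, Matrix.head_cons] at h0 h1
      exact hmax x hx (by rw [h0, hsum]) (by rw [h1, hcon])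
    have hfd : ∀ i : Fin 2, HasStrictFDerivAt (f i) (f' i) p := by
      intro i
      fin_cases i <;> simp only [hf, hf', Matrix.cons_val_zero, Matrix.cons_val_one,
        Matrix.head_cons] <;> [exact hg'; exact hh']
    obtain ⟨Λ, Λ₀, hne, heq⟩ := hextr.exists_multipliers_of_hasStrictFDerivAt hfd hφ'
    have heval : ∀ j : Fin W, Λ 0 + Λ 1 * (q' * p j ^ (q' - 1) * E j)
        + Λ₀ * (k / (1 - q) * (q * p j ^ (q - 1))) = 0 := by
      intro j
      have h := DFunLike.congr_fun heq (Pi.single j 1)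
      rw [Fin.sum_univ_two] at h
      simpa [hf', ContinuousLinearMap.smul_apply, eval_sum_smul_proj, smul_eq_mul, mul_one, Pi.single_apply, mul_ite, mul_zero]
        using h
    have hΛ₀ : Λ₀ ≠ 0 := by
      intro h0
      -- degenerate case forces all energies to vanish
      have hdeg : ∀ j : Fin W, Λ 0 + Λ 1 * (q' * p j ^ (q' - 1) * E j) = 0 := by
        intro j
        have := heval j
        rw [h0, zero_mul, add_zero] at this
        exact this
      have hΛ0 : Λ 0 = 0 := by
        have hsum2 : ∑ j, p j * (Λ 0 + Λ 1 * (q' * p j ^ (q' - 1) * E j)) = 0 := by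
          simp [hdeg]
        have : ∑ j, p j * (Λ 0 + Λ 1 * (q' * p j ^ (q' - 1) * E j))
            = Λ 0 * (∑ j, p j) + Λ 1 * q' * (∑ j, p j ^ q' * E j) := by
          rw [Finset.mul_sum, Finset.mul_sum, ← Finset.sum_add_distrib]
          refine Finset.sum_congr rfl fun j _ => ?_
          rw [← hmul j q']
          ring
        rw [this, hsum, hcon] at hsum2
        linarith
      have hΛ1 : Λ 1 ≠ 0 := by
        intro h1
        apply hne
        have : Λ = 0 := by
          funext i
          fin_cases i <;> simpa [hΛ0, h1]
        simp [this, h0]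
      apply hE0
      intro j
      have h := hdeg j
      rw [hΛ0, zero_add] at h
      have hpj : p j ^ (q' - 1) > 0 := Real.rpow_pos_of_pos (hp j) _
      rcases mul_eq_zero.mp h with h' | h'
      · exact absurd h' hΛ1
      · rcases mul_eq_zero.mp h' with h'' | h''
        · exact absurd h'' (mul_ne_zero hq'.ne' hpj.ne')
        · exact h''
    -- nondegenerate case: solve for p j ^ (q-1)
    obtain ⟨C, hC⟩ : ∃ C : ℝ, C = Λ₀ * (k / (1 - q) * q) := ⟨_, rfl⟩
    have hCne : C ≠ 0 := by
      rw [hC]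
      exact mul_ne_zero hΛ₀ (mul_ne_zero (div_ne_zero hk.ne' h1q) hq.ne')
    have hsolve : ∀ j : Fin W, p j ^ (q - 1) =
        (-Λ 0 / C) + (-Λ 1 * q' / C) * (p j ^ (q' - 1) * E j) := by
      intro j
      have h' : C * p j ^ (q - 1) = -Λ 0 - Λ 1 * (q' * p j ^ (q' - 1) * E j) := by
        rw [hC]; linear_combination heval j
      calc p j ^ (q - 1) = C⁻¹ * (C * p j ^ (q - 1)) := (inv_mul_cancel_left₀ hCne _).symm
        _ = C⁻¹ * (-Λ 0 - Λ 1 * (q' * p j ^ (q' - 1) * E j)) := by rw [h']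
        _ = -Λ 0 / C + -Λ 1 * q' / C * (p j ^ (q' - 1) * E j) := by ring
    have hAS : -Λ 0 / C = S := sumAB _ _ hsolve
    obtain ⟨β, hβ⟩ := main (-Λ 1 * q' / C) (by
      intro j
      rw [hsolve j, hAS])
    exact ⟨β, hβ, hsecond⟩
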